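/- arXiv:1401.2486 — 3 statements merged into one kernel-verified Lean document; each statement's English description precedes it below -/
import Mathlib

section
/- Let B be a unital C*-algebra, p ∈ B a full projection (i.e., the closed two-sided ideal generated by p is all of B, equivalently the linear span of BpB is dense in B), and set C = pBp. If C has a unique tracial state, then B has at most one tracial state. -/
/-- A tracial state on a unital complex C*-algebra, as a linear functional. -/
def IsTracialState {B : Type*} [NormedRing B] [StarRing B] [NormedAlgebra ℂ B]
    (τ : B →ₗ[ℂ] ℂ) : Prop :=
  τ 1 = 1 ∧ (∀ a : B, 0 ≤ (τ (star a * a)).re ∧ (τ (star a * a)).im = 0) ∧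
    ∀ a b : B, τ (a * b) = τ (b * a)

/-- A tracial state on the corner `pBp`, encoded as a linear functional on `B`
which is unital at `p`, positive and tracial on corner elements. -/
def IsCornerTracialState {B : Type*} [NormedRing B] [StarRing B] [NormedAlgebra ℂ B]
    (p : B) (τ : B →ₗ[ℂ] ℂ) : Prop :=
  τ p = 1 ∧
  (∀ a : B, 0 ≤ (τ (star (p * a * p) * (p * a * p))).re ∧
      (τ (star (p * a * p) * (p * a * p))).im = 0) ∧
  ∀ a b : B, τ ((p * a * p) * (p * b * p)) = τ ((p * b * p) * (p * a * p))

section Aux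

variable {B : Type*} [NormedRing B] [StarRing B] [CStarRing B] [NormedAlgebra ℂ B]
    [StarModule ℂ B] [CompleteSpace B]

lemma aux_nonneg (τ : B →ₗ[ℂ] ℂ)
    (hpos : ∀ a : B, 0 ≤ (τ (star a * a)).re ∧ (τ (star a * a)).im = 0)
    {c : B} (hc : c ∈ AddSubmonoid.closure (Set.range fun s : B => star s * s)) :
    0 ≤ (τ c).re ∧ (τ c).im = 0 := by
  induction hc using AddSubmonoid.closure_induction with
  | mem x hx => obtain ⟨s, rfl⟩ := hx; exact hpos s
  | zero => simp
  | add x y _ _ hx hy =>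
    simp only [map_add, Complex.add_re, Complex.add_im]
    exact ⟨add_nonneg hx.1 hy.1, by rw [hx.2, hy.2, add_zero]⟩

lemma aux_algebraMap (r : ℝ) : algebraMap ℝ B r = (r : ℂ) • (1 : B) := by
  rw [IsScalarTower.algebraMap_apply ℝ ℂ B, Algebra.algebraMap_eq_smul_one]
  norm_num

lemma aux_im_sa (τ : B →ₗ[ℂ] ℂ)
    (hpos : ∀ a : B, 0 ≤ (τ (star a * a)).re ∧ (τ (star a * a)).im = 0)
    {x : B} (hx : IsSelfAdjoint x) : (τ x).im = 0 := by
  letI : CStarAlgebra B := {}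
  letI := CStarAlgebra.spectralOrder B
  haveI := CStarAlgebra.spectralOrderedRing B
  have h : x ≤ algebraMap ℝ B ‖x‖ := hx.le_algebraMap_norm_self
  have h0 : (0 : B) ≤ algebraMap ℝ B ‖x‖ - x := sub_nonneg.mpr h
  rw [StarOrderedRing.nonneg_iff] at h0
  have h2 := (aux_nonneg τ hpos h0).2
  have him1 : (τ 1).im = 0 := by simpa using (hpos 1).2
  rw [map_sub, aux_algebraMap, map_smul] at h2
  simp only [smul_eq_mul, Complex.sub_im, Complex.mul_im, Complex.ofReal_re,
    Complex.ofReal_im, him1] at h2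
  linarith

lemma aux_star (τ : B →ₗ[ℂ] ℂ)
    (hpos : ∀ a : B, 0 ≤ (τ (star a * a)).re ∧ (τ (star a * a)).im = 0)
    (x : B) : τ (star x) = (starRingEnd ℂ) (τ x) := by
  set a : B := (2⁻¹ : ℂ) • (x + star x) with ha_def
  set b : B := (-Complex.I * 2⁻¹) • (x - star x) with hb_def
  have ha : IsSelfAdjoint a := by
    rw [IsSelfAdjoint, ha_def, star_smul, star_add, star_star]
    rw [show star (2⁻¹ : ℂ) = 2⁻¹ by simp]
    module
  have hb : IsSelfAdjoint b := by
    rw [IsSelfAdjoint, hb_def, star_smul, star_sub, star_star]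
    rw [show star (-Complex.I * 2⁻¹ : ℂ) = Complex.I * 2⁻¹ by
      simp [Complex.star_def]]
    module
  have hxab : x = a + Complex.I • b := by
    rw [ha_def, hb_def, smul_smul]
    rw [show Complex.I * (-Complex.I * 2⁻¹) = (2⁻¹ : ℂ) by
      linear_combination (-2⁻¹ : ℂ) * Complex.I_sq]
    module
  have hsx : star x = a - Complex.I • b := by
    rw [hxab, star_add, ha.star_eq, star_smul, hb.star_eq]
    rw [show star Complex.I = -Complex.I by simp [Complex.star_def]]
    module
  have hima := aux_im_sa τ hpos ha
  have himb := aux_im_sa τ hpos hb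
  rw [hsx]
  conv_rhs => rw [hxab]
  simp only [map_add, map_sub, map_smul, smul_eq_mul, map_mul, Complex.conj_I]
  rw [Complex.conj_eq_iff_im.mpr hima, Complex.conj_eq_iff_im.mpr himb]
  ring

/-- The positive-semidefinite sesquilinear form attached to a positive functional. -/
noncomputable def tauCore (τ : B →ₗ[ℂ] ℂ)
    (hpos : ∀ a : B, 0 ≤ (τ (star a * a)).re ∧ (τ (star a * a)).im = 0) :
    PreInnerProductSpace.Core ℂ B where
  inner x y := τ (star x * y)
  conj_inner_symm x y := by
    show (starRingEnd ℂ) (τ (star y * x)) = τ (star x * y)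
    rw [← aux_star τ hpos, star_mul, star_star]
  re_inner_nonneg x := by simpa using (hpos x).1
  add_left x y z := by simp [star_add, add_mul]
  smul_left x y r := by
    simp [star_smul, smul_mul_assoc]

lemma aux_cs (τ : B →ₗ[ℂ] ℂ)
    (hpos : ∀ a : B, 0 ≤ (τ (star a * a)).re ∧ (τ (star a * a)).im = 0)
    (x y : B) :
    ‖τ (star x * y)‖ ^ 2 ≤ (τ (star x * x)).re * (τ (star y * y)).re := by
  letI c : PreInnerProductSpace.Core ℂ B := tauCore τ hpos
  letI : Inner ℂ B := InnerProductSpace.Core.toPreInner'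
  have h := InnerProductSpace.Core.inner_mul_inner_self_le (𝕜 := ℂ) (F := B) x y
  have hxy : (inner ℂ x y : ℂ) = τ (star x * y) := rfl
  have hyx : (inner ℂ y x : ℂ) = τ (star y * x) := rfl
  have hnorm : ‖τ (star y * x)‖ = ‖τ (star x * y)‖ := by
    have he : τ (star y * x) = (starRingEnd ℂ) (τ (star x * y)) := by
      rw [← aux_star τ hpos, star_mul, star_star]
    rw [he, RCLike.norm_conj]
  rw [hxy, hyx, hnorm] at h
  have hxx : (inner ℂ x x : ℂ) = τ (star x * x) := rfl
  have hyy : (inner ℂ y y : ℂ) = τ (star y * y) := rfl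
  rw [hxx, hyy] at h
  simpa [sq, RCLike.re_to_complex] using h

lemma aux_sq_bound (τ : B →ₗ[ℂ] ℂ)
    (hpos : ∀ a : B, 0 ≤ (τ (star a * a)).re ∧ (τ (star a * a)).im = 0)
    (h1 : τ 1 = 1) (b : B) : (τ (star b * b)).re ≤ ‖b‖ ^ 2 := by
  letI : CStarAlgebra B := {}
  letI := CStarAlgebra.spectralOrder B
  haveI := CStarAlgebra.spectralOrderedRing B
  have hle : star b * b ≤ algebraMap ℝ B (‖b‖ ^ 2) :=
    CStarAlgebra.star_mul_le_algebraMap_norm_sq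
  have h0 : (0 : B) ≤ algebraMap ℝ B (‖b‖ ^ 2) - star b * b := sub_nonneg.mpr hle
  rw [StarOrderedRing.nonneg_iff] at h0
  have h2 := (aux_nonneg τ hpos h0).1
  rw [map_sub, aux_algebraMap, map_smul, h1] at h2
  simp only [smul_eq_mul, mul_one, Complex.sub_re, Complex.ofReal_re] at h2
  linarith

lemma aux_bound (τ : B →ₗ[ℂ] ℂ)
    (hpos : ∀ a : B, 0 ≤ (τ (star a * a)).re ∧ (τ (star a * a)).im = 0)
    (h1 : τ 1 = 1) (b : B) : ‖τ b‖ ≤ ‖b‖ := by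
  have h := aux_cs τ hpos 1 b
  simp only [star_one, one_mul, mul_one, h1, Complex.one_re] at h
  have h2 := aux_sq_bound τ hpos h1 b
  nlinarith [norm_nonneg (τ b), norm_nonneg b]

lemma aux_continuous (τ : B →ₗ[ℂ] ℂ)
    (hpos : ∀ a : B, 0 ≤ (τ (star a * a)).re ∧ (τ (star a * a)).im = 0)
    (h1 : τ 1 = 1) : Continuous τ :=
  AddMonoidHomClass.continuous_of_bound τ 1 fun b => by
    simpa using aux_bound τ hpos h1 b

lemma aux_trace_corner (τ : B →ₗ[ℂ] ℂ) {p : B}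
    (htr : ∀ a b : B, τ (a * b) = τ (b * a)) (hproj : IsIdempotentElem p)
    (x y : B) : τ (x * p * y) = τ (p * (y * x) * p) := by
  have h1 : τ (x * p * y) = τ (p * (y * x)) := by
    rw [htr (x * p) y, ← mul_assoc, htr (y * x) p]
  have h2 : τ (p * (y * x) * p) = τ (p * (y * x)) := by
    rw [htr (p * (y * x)) p, ← mul_assoc, hproj]
  rw [h1, h2]

end Aux

/-- If `p` is a full projection in a unital C*-algebra `B` and the corner `pBp` has a
unique tracial state, then `B` has at most one tracial state. -/
theorem stmt0 {B : Type*} [NormedRing B] [StarRing B] [CStarRing B] [NormedAlgebra ℂ B]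
    [StarModule ℂ B] [CompleteSpace B]
    (p : B) (hproj : IsIdempotentElem p) (hsa : star p = p)
    (hfull : closure ((Submodule.span ℂ {z : B | ∃ x y : B, z = x * p * y} : Submodule ℂ B) : Set B)
        = Set.univ)
    (hexists : ∃ σ : B →ₗ[ℂ] ℂ, IsCornerTracialState p σ)
    (huniq : ∀ σ₁ σ₂ : B →ₗ[ℂ] ℂ, IsCornerTracialState p σ₁ → IsCornerTracialState p σ₂ →
        ∀ x : B, σ₁ (p * x * p) = σ₂ (p * x * p)) :
    ∀ τ₁ τ₂ : B →ₗ[ℂ] ℂ, IsTracialState τ₁ → IsTracialState τ₂ → τ₁ = τ₂ := by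
  intro τ₁ τ₂ h₁ h₂
  obtain ⟨h₁1, h₁pos, h₁tr⟩ := h₁
  obtain ⟨h₂1, h₂pos, h₂tr⟩ := h₂
  -- facts about τ p for a tracial state τ
  have hpfact : ∀ (τ : B →ₗ[ℂ] ℂ),
      (∀ a : B, 0 ≤ (τ (star a * a)).re ∧ (τ (star a * a)).im = 0) →
      0 ≤ (τ p).re ∧ (τ p).im = 0 := by
    intro τ hpos
    have : star p * p = p := by rw [hsa, hproj]
    simpa [this] using hpos p
  -- τ p ≠ 0 for any tracial state τ
  have hpne : ∀ (τ : B →ₗ[ℂ] ℂ), τ 1 = 1 →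
      (∀ a : B, 0 ≤ (τ (star a * a)).re ∧ (τ (star a * a)).im = 0) →
      (∀ a b : B, τ (a * b) = τ (b * a)) → τ p ≠ 0 := by
    intro τ h1 hpos htr hp0
    -- τ vanishes on the corner, hence on all generators
    have hcorner : ∀ z : B, τ (p * z * p) = 0 := by
      intro z
      have hcs := aux_cs τ hpos p (z * p)
      have hpp : star p * p = p := by rw [hsa, hproj]
      rw [hpp, hp0] at hcs
      simp only [Complex.zero_re, zero_mul] at hcs
      have : ‖τ (star p * (z * p))‖ = 0 := by nlinarith [norm_nonneg (τ (star p * (z * p)))]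
      have hz : τ (star p * (z * p)) = 0 := norm_eq_zero.mp this
      rw [hsa, ← mul_assoc] at hz
      exact hz
    have hgen : ∀ z ∈ {z : B | ∃ x y : B, z = x * p * y}, τ z = 0 := by
      rintro z ⟨x, y, rfl⟩
      rw [aux_trace_corner τ htr hproj x y]
      exact hcorner (y * x)
    have hspan : (Submodule.span ℂ {z : B | ∃ x y : B, z = x * p * y}) ≤ LinearMap.ker τ :=
      Submodule.span_le.mpr fun z hz => LinearMap.mem_ker.mpr (hgen z hz)
    have hclosed : IsClosed (LinearMap.ker τ : Set B) :=
      IsClosed.preimage (aux_continuous τ hpos h1) isClosed_singleton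
    have hsub : closure ((Submodule.span ℂ {z : B | ∃ x y : B, z = x * p * y} :
        Submodule ℂ B) : Set B) ⊆ (LinearMap.ker τ : Set B) :=
      closure_minimal hspan hclosed
    rw [hfull] at hsub
    have : τ 1 = 0 := hsub (Set.mem_univ 1)
    rw [h1] at this
    exact one_ne_zero this
  have h₁pne := hpne τ₁ h₁1 h₁pos h₁tr
  have h₂pne := hpne τ₂ h₂1 h₂pos h₂tr
  -- the normalized restrictions are corner tracial states
  have hcorner : ∀ (τ : B →ₗ[ℂ] ℂ), τ 1 = 1 →
      (∀ a : B, 0 ≤ (τ (star a * a)).re ∧ (τ (star a * a)).im = 0) →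
      (∀ a b : B, τ (a * b) = τ (b * a)) →
      IsCornerTracialState p ((τ p)⁻¹ • τ) := by
    intro τ h1 hpos htr
    have hne := hpne τ h1 hpos htr
    obtain ⟨hre, him⟩ := hpfact τ hpos
    have hpreal : τ p = ((τ p).re : ℂ) := by
      apply Complex.ext <;> simp [him]
    have hrpos : 0 < (τ p).re := by
      rcases lt_or_eq_of_le hre with h | h
      · exact h
      · exfalso; apply hne; rw [hpreal, ← h]; simp
    refine ⟨?_, ?_, ?_⟩
    · simp only [LinearMap.smul_apply, smul_eq_mul]
      exact inv_mul_cancel₀ hne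
    · intro a
      obtain ⟨hre', him'⟩ := hpos (p * a * p)
      simp only [LinearMap.smul_apply, smul_eq_mul]
      rw [hpreal, ← Complex.ofReal_inv]
      constructor
      · simp only [Complex.mul_re, Complex.ofReal_re, Complex.ofReal_im, zero_mul, sub_zero]
        exact mul_nonneg (inv_nonneg.mpr hre) hre'
      · simp only [Complex.mul_im, Complex.ofReal_re, Complex.ofReal_im, zero_mul, add_zero,
          him', mul_zero]
    · intro a b
      simp only [LinearMap.smul_apply, smul_eq_mul]
      rw [htr]
  have hc₁ := hcorner τ₁ h₁1 h₁pos h₁tr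
  have hc₂ := hcorner τ₂ h₂1 h₂pos h₂tr
  have hratio := huniq _ _ hc₁ hc₂
  simp only [LinearMap.smul_apply, smul_eq_mul] at hratio
  -- the difference functional
  set L : B →ₗ[ℂ] ℂ := τ₂ p • τ₁ - τ₁ p • τ₂ with hL_def
  have hLgen : ∀ z ∈ {z : B | ∃ x y : B, z = x * p * y}, L z = 0 := by
    rintro z ⟨x, y, rfl⟩
    simp only [hL_def, LinearMap.sub_apply, LinearMap.smul_apply, smul_eq_mul]
    rw [aux_trace_corner τ₁ h₁tr hproj x y, aux_trace_corner τ₂ h₂tr hproj x y]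
    have hval := hratio (y * x)
    field_simp [h₁pne, h₂pne] at hval
    linear_combination hval
  have hLspan : (Submodule.span ℂ {z : B | ∃ x y : B, z = x * p * y}) ≤ LinearMap.ker L :=
    Submodule.span_le.mpr fun z hz => LinearMap.mem_ker.mpr (hLgen z hz)
  have hLcont : Continuous L := by
    have c1 := aux_continuous τ₁ h₁pos h₁1
    have c2 := aux_continuous τ₂ h₂pos h₂1
    have hLcoe : ⇑L = fun b => τ₂ p * τ₁ b - τ₁ p * τ₂ b := by
      funext b; simp [hL_def]
    rw [hLcoe]
    exact (continuous_const.mul c1).sub (continuous_const.mul c2)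
  have hclosed : IsClosed (LinearMap.ker L : Set B) :=
    IsClosed.preimage hLcont isClosed_singleton
  have hsub : closure ((Submodule.span ℂ {z : B | ∃ x y : B, z = x * p * y} :
      Submodule ℂ B) : Set B) ⊆ (LinearMap.ker L : Set B) :=
    closure_minimal hLspan hclosed
  rw [hfull] at hsub
  have hLzero : ∀ b : B, L b = 0 := fun b => hsub (Set.mem_univ b)
  have hpeq : τ₂ p = τ₁ p := by
    have := hLzero 1
    simp only [hL_def, LinearMap.sub_apply, LinearMap.smul_apply, smul_eq_mul, h₁1, h₂1,
      mul_one] at this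
    exact sub_eq_zero.mp this
  ext b
  have hb := hLzero b
  simp only [hL_def, LinearMap.sub_apply, LinearMap.smul_apply, smul_eq_mul, hpeq] at hb
  have := sub_eq_zero.mp hb
  exact mul_left_cancel₀ h₁pne this
end

section
/- Let A ⊂ B be a unital inclusion of C*-algebras with conditional expectation E : B → A, and suppose {(a_i, b_i)}_{i=1}^n is a quasi-basis, i.e., x = Σ_i a_i E(x b_i) = Σ_i E(a_i x) b_i for all x ∈ B. Then the Watatani index Σ_i a_i b_i is independent of the choice of quasi-basis. -/
/-- Watatani index is independent of the choice of quasi-basis: if `{(aᵢ, bᵢ)}` and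
`{(cⱼ, dⱼ)}` are quasi-bases for a conditional expectation `E : B → A`, then
`∑ aᵢ bᵢ = ∑ cⱼ dⱼ`. -/
theorem stmt4 {B : Type*} [NormedRing B] [StarRing B] [CStarRing B] [NormedAlgebra ℂ B]
    [StarModule ℂ B] [CompleteSpace B]
    (A : StarSubalgebra ℂ B) (E : B →ₗ[ℂ] B)
    -- E is a conditional expectation onto A:
    (hEmem : ∀ x : B, E x ∈ A)
    (hEid : ∀ a ∈ A, E a = a)
    (hEbimod : ∀ a ∈ A, ∀ a' ∈ A, ∀ x : B, E (a * x * a') = a * E x * a')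
    {n m : ℕ} (a b : Fin n → B) (c d : Fin m → B)
    -- {(aᵢ, bᵢ)} is a quasi-basis for E:
    (hab₁ : ∀ x : B, x = ∑ i, a i * E (x * b i))
    (hab₂ : ∀ x : B, x = ∑ i, E (a i * x) * b i)
    -- {(cⱼ, dⱼ)} is a quasi-basis for E:
    (hcd₁ : ∀ x : B, x = ∑ j, c j * E (x * d j))
    (hcd₂ : ∀ x : B, x = ∑ j, E (c j * x) * d j) :
    ∑ i, a i * b i = ∑ j, c j * d j := by
  calc ∑ i, a i * b i
      = ∑ i, a i * ∑ j, E (c j * b i) * d j := by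
        refine Finset.sum_congr rfl fun i _ => ?_
        rw [← hcd₂ (b i)]
    _ = ∑ j, (∑ i, a i * E (c j * b i)) * d j := by
        simp_rw [Finset.mul_sum, Finset.sum_mul, ← mul_assoc]
        exact Finset.sum_comm
    _ = ∑ j, c j * d j := by
        refine Finset.sum_congr rfl fun j _ => ?_
        rw [← hab₁ (c j)]
end

section
/- Let A be a unital simple C*-algebra and e ∈ A a nonzero projection. Then there exist finitely many elements x_1, …, x_n ∈ A such that Σ_{i=1}^n x_i e x_i* = 1. -/
open Finset in
/-- In a unital simple C*-algebra, for any nonzero projection `e` there exist finitely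
many elements `x₁, …, xₙ` with `∑ xᵢ e xᵢ* = 1` (Watatani, Lemma 2.1.6). -/
theorem stmt17 {A : Type*} [NormedRing A] [StarRing A] [CStarRing A] [NormedAlgebra ℂ A]
    [StarModule ℂ A] [CompleteSpace A]
    (hsimple : ∀ I : TwoSidedIdeal A, IsClosed (I : Set A) → I = ⊥ ∨ I = ⊤)
    (e : A) (he : IsIdempotentElem e) (hesa : star e = e) (hne : e ≠ 0) :
    ∃ (n : ℕ) (x : Fin n → A), ∑ i, x i * e * star (x i) = 1 := by
  letI : CStarAlgebra A := {}
  letI := CStarAlgebra.spectralOrder A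
  haveI := CStarAlgebra.spectralOrderedRing A
  haveI : Nontrivial A := nontrivial_of_ne e 0 hne
  -- the set of finite sums ∑ yᵢ e zᵢ
  set S : Set A := {a | ∃ n : ℕ, ∃ y z : Fin n → A, ∑ i, y i * e * z i = a} with hS
  have hzero : (0 : A) ∈ S := ⟨0, ![], ![], by simp⟩
  have hadd : ∀ {u v : A}, u ∈ S → v ∈ S → u + v ∈ S := by
    rintro u v ⟨m, y₁, z₁, rfl⟩ ⟨n, y₂, z₂, rfl⟩
    exact ⟨m + n, Fin.append y₁ y₂, Fin.append z₁ z₂, by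
      simp [Fin.sum_univ_add, Fin.append_left, Fin.append_right]⟩
  have hneg : ∀ {u : A}, u ∈ S → -u ∈ S := by
    rintro u ⟨n, y, z, rfl⟩
    exact ⟨n, fun i => -(y i), z, by simp [Finset.sum_neg_distrib]⟩
  have hml : ∀ {r u : A}, u ∈ S → r * u ∈ S := by
    rintro r u ⟨n, y, z, rfl⟩
    exact ⟨n, fun i => r * y i, z, by simp [Finset.mul_sum, mul_assoc]⟩
  have hmr : ∀ {u r : A}, u ∈ S → u * r ∈ S := by
    rintro u r ⟨n, y, z, rfl⟩
    exact ⟨n, y, fun i => z i * r, by simp [Finset.sum_mul, mul_assoc]⟩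
  -- the closure of `S` is a closed two-sided ideal
  let J : TwoSidedIdeal A := TwoSidedIdeal.mk' (closure S)
    (subset_closure hzero)
    (fun hx hy => map_mem_closure₂ continuous_add hx hy fun _ ha _ hb => hadd ha hb)
    (fun hx => map_mem_closure continuous_neg hx fun _ ha => hneg ha)
    (fun {x y} hy => map_mem_closure (f := fun u => x * u)
      (continuous_const.mul continuous_id) hy fun _ ha => hml ha)
    (fun {x y} hx => map_mem_closure (f := fun u => u * y)
      (continuous_id.mul continuous_const) hx fun _ ha => hmr ha)
  have hJmem : ∀ x : A, x ∈ J ↔ x ∈ closure S := fun x =>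
    TwoSidedIdeal.mem_mk' _ _ _ _ _ _ x
  have heS : e ∈ S := ⟨1, fun _ => 1, fun _ => 1, by simp⟩
  have hJclosed : IsClosed (J : Set A) := by
    have : (J : Set A) = closure S := Set.ext fun x => hJmem x
    rw [this]; exact isClosed_closure
  have hJtop : J = ⊤ := by
    refine (hsimple J hJclosed).resolve_left fun hbot => hne ?_
    have : e ∈ J := (hJmem e).mpr (subset_closure heS)
    rw [hbot] at this
    simpa using this
  have h1 : (1 : A) ∈ closure S := by
    rw [← hJmem]; rw [hJtop]; trivial
  -- pick an approximation
  obtain ⟨a, haS, hdist⟩ := Metric.mem_closure_iff.mp h1 (1/2) (by norm_num)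
  obtain ⟨n, y, z, ha⟩ := haS
  have hna : ‖(1 : A) - a‖ < 1/2 := by rwa [dist_eq_norm] at hdist
  -- the symmetrization
  set h : A := a + star a with hh
  have hhsa : IsSelfAdjoint h := by
    rw [hh]; exact IsSelfAdjoint.add_star_self a
  have hnh : ‖(2 : A) - h‖ < 1 := by
    have : (2 : A) - h = (1 - a) + star (1 - a) := by
      rw [hh, star_sub, star_one, sub_add_sub_comm, one_add_one_eq_two]
    rw [this]
    calc ‖(1 - a) + star (1 - a)‖ ≤ ‖(1:A) - a‖ + ‖star ((1:A) - a)‖ := norm_add_le _ _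
      _ = ‖(1:A) - a‖ + ‖(1:A) - a‖ := by rw [norm_star]
      _ < 1/2 + 1/2 := by linarith
      _ = 1 := by norm_num
  -- the symmetric family
  set w : Fin (n + n) → A := Fin.append y (fun i => star (z i)) with hw
  set c : A := ∑ i, w i * e * star (w i) with hc
  have hterm : ∀ b : A, 0 ≤ b * e * star b := by
    intro b
    have : b * e * star b = (b * e) * star (b * e) := by
      rw [star_mul, hesa, mul_assoc, mul_assoc, ← mul_assoc e e _, he]
    rw [this]
    exact mul_star_self_nonneg _
  have hcnn : 0 ≤ c := Finset.sum_nonneg fun i _ => hterm _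
  -- h ≤ c
  have hhc : h ≤ c := by
    rw [← sub_nonneg]
    have key : c - h = ∑ i : Fin n, (y i - star (z i)) * e * star (y i - star (z i)) := by
      have hsa : star a = ∑ i : Fin n, star (z i) * e * star (y i) := by
        rw [← ha, star_sum]
        exact Finset.sum_congr rfl fun i _ => by
          simp [star_mul, hesa, mul_assoc]
      have hcsplit : c = ∑ i : Fin n, y i * e * star (y i)
          + ∑ i : Fin n, star (z i) * e * z i := by
        rw [hc, hw, Fin.sum_univ_add]
        congr 1
        · exact Finset.sum_congr rfl fun i _ => by rw [Fin.append_left]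
        · exact Finset.sum_congr rfl fun i _ => by rw [Fin.append_right, star_star]
      rw [hcsplit, hh, hsa, ← ha, ← Finset.sum_add_distrib, ← Finset.sum_add_distrib,
        ← Finset.sum_sub_distrib]
      refine Finset.sum_congr rfl fun i _ => ?_
      simp only [star_sub, star_star]
      noncomm_ring
    rw [key]
    exact Finset.sum_nonneg fun i _ => hterm _
  -- 1 ≤ h
  have h1h : (1 : A) ≤ h := by
    rw [← sub_nonneg]
    have hsa' : IsSelfAdjoint (h - 1) := hhsa.sub (star_one A)
    rw [StarOrderedRing.nonneg_iff_spectrum_nonneg (R := ℝ) _ hsa']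
    intro μ hμ
    by_contra hlt
    push_neg at hlt
    have hmem : μ - 1 ∈ spectrum ℝ ((h - 1) - algebraMap ℝ A 1) := by
      rw [← spectrum.sub_singleton_eq]
      exact Set.sub_mem_sub hμ rfl
    have heq : (h - 1) - algebraMap ℝ A 1 = -((2 : A) - h) := by
      rw [map_one, sub_sub, one_add_one_eq_two, neg_sub]
    rw [heq] at hmem
    have := spectrum.norm_le_norm_of_mem hmem
    rw [norm_neg] at this
    have : |μ - 1| ≤ ‖(2:A) - h‖ := by simpa [Real.norm_eq_abs] using this
    have : |μ - 1| < 1 := lt_of_le_of_lt this hnh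
    rw [abs_lt] at this
    linarith
  have h1c : (1 : A) ≤ c := le_trans h1h hhc
  have hcu : IsUnit c := CStarAlgebra.isUnit_of_le 1 h1c isStrictlyPositive_one
  -- conjugate by c^{-1/2}
  set d : A := c ^ (-(1/2) : ℝ) with hd
  have hdnn : 0 ≤ d := CFC.rpow_nonneg
  have hdsa : star d = d := hdnn.star_eq
  have hconj : d * c * d = 1 := CFC.conjugate_rpow_neg_one_half c ⟨hcnn, hcu⟩
  refine ⟨n + n, fun i => d * w i, ?_⟩
  have : ∑ i : Fin (n+n), (d * w i) * e * star (d * w i)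
      = d * c * d := by
    rw [hc, Finset.mul_sum, Finset.sum_mul]
    refine Finset.sum_congr rfl fun i _ => ?_
    rw [star_mul, hdsa]
    noncomm_ring
  rw [this, hconj]
end
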